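/- arXiv:1011.2134 — 2 statements merged into one kernel-verified Lean document; each statement's English description precedes it below -/
import Mathlib

section
/- Let q be an odd prime power with -1 a square in F_q. The number of points [x_1:x_2:x_3:y_1:y_2:y_3] in P^5(F_q) satisfying x_1²+x_2²+x_3² - y_1²-y_2²-y_3² = 0 and x_1²+x_2²+x_3² ≠ 0 equals q²(1 + q²). -/
open Finset

private lemma nat_card_sigma' {ι : Type} [Fintype ι] {β : ι → Type} [∀ i, Finite (β i)] :
    Nat.card (Σ i, β i) = ∑ i, Nat.card (β i) := by
  letI : ∀ i, Fintype (β i) := fun i => Fintype.ofFinite _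
  simp [Nat.card_eq_fintype_card]

section aux

variable {F : Type} [Field F] [Fintype F] [DecidableEq F]

private lemma card_mul_ne {u : F} (hu : u ≠ 0) :
    Nat.card {p : F × F // p.1 * p.2 = u} = Fintype.card F - 1 := by
  classical
  have e : Fˣ ≃ {p : F × F // p.1 * p.2 = u} :=
  { toFun := fun a => ⟨((a : F), (a : F)⁻¹ * u), by
      rw [← mul_assoc, mul_inv_cancel₀ a.ne_zero, one_mul]⟩
    invFun := fun p => Units.mk0 p.1.1 (by
      intro h; apply hu; rw [← p.2, h, zero_mul])
    left_inv := fun a => by ext; simp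
    right_inv := fun p => by
      have h1 : p.1.1 ≠ 0 := by intro h; apply hu; rw [← p.2, h, zero_mul]
      apply Subtype.ext
      have h2 : p.1.2 = (p.1.1)⁻¹ * u :=
        (eq_inv_mul_iff_mul_eq₀ h1).mpr p.2
      simp only [Units.val_mk0]
      exact Prod.ext rfl h2.symm }
  rw [← Nat.card_congr e, Nat.card_units, Nat.card_eq_fintype_card]

private lemma card_mul_zero :
    Nat.card {p : F × F // p.1 * p.2 = 0} = 2 * Fintype.card F - 1 := by
  classical
  have e : (F ⊕ {a : F // a ≠ 0}) ≃ {p : F × F // p.1 * p.2 = 0} :=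
  { toFun := fun x => match x with
      | Sum.inl b => ⟨(0, b), by simp⟩
      | Sum.inr a => ⟨(a.1, 0), by simp⟩
    invFun := fun p => if h : p.1.1 = 0 then Sum.inl p.1.2 else Sum.inr ⟨p.1.1, h⟩
    left_inv := fun x => by
      match x with
      | Sum.inl b => simp
      | Sum.inr a => simp [a.2]
    right_inv := fun p => by
      by_cases h : p.1.1 = 0
      · simp only [h, dif_pos]
        exact Subtype.ext (Prod.ext h.symm rfl)
      · simp only [h, dif_neg, not_false_iff]
        have h2 : p.1.2 = 0 := by
          rcases mul_eq_zero.mp p.2 with h' | h'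
          · exact absurd h' h
          · exact h'
        exact Subtype.ext (Prod.ext rfl h2.symm) }
  have h1 : 1 ≤ Fintype.card F := Fintype.card_pos
  rw [← Nat.card_congr e, Nat.card_sum, Nat.card_eq_fintype_card,
    Nat.card_congr (unitsEquivNeZero (G₀ := F)).symm, Nat.card_units, Nat.card_eq_fintype_card]
  omega

private lemma card_abc (hchar : ringChar F ≠ 2) (t : F) :
    (Nat.card {x : F × F × F // x.1 * x.2.1 + x.2.2 ^ 2 = t} : ℤ)
      = (Fintype.card F : ℤ) ^ 2 + (Fintype.card F : ℤ) * quadraticChar F t := by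
  classical
  have e : {x : F × F × F // x.1 * x.2.1 + x.2.2 ^ 2 = t}
      ≃ Σ c : F, {p : F × F // p.1 * p.2 = t - c ^ 2} :=
  { toFun := fun x => ⟨x.1.2.2, ⟨(x.1.1, x.1.2.1), by
      have h := x.2
      show x.1.1 * x.1.2.1 = t - x.1.2.2 ^ 2
      linear_combination h⟩⟩
    invFun := fun y => ⟨(y.2.1.1, y.2.1.2, y.1), by
      have h := y.2.2
      show y.2.1.1 * y.2.1.2 + y.1 ^ 2 = t
      linear_combination h⟩
    left_inv := fun x => rfl
    right_inv := fun y => rfl }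
  rw [Nat.card_congr e, nat_card_sigma']
  have hcard : ∀ c : F, Nat.card {p : F × F // p.1 * p.2 = t - c ^ 2}
      = if c ^ 2 = t then 2 * Fintype.card F - 1 else Fintype.card F - 1 := by
    intro c
    by_cases h : c ^ 2 = t
    · rw [if_pos h]
      have : t - c ^ 2 = 0 := by rw [h, sub_self]
      rw [this, card_mul_zero]
    · rw [if_neg h]
      exact card_mul_ne (sub_ne_zero.mpr (fun hh => h hh.symm))
  have h1 : 1 ≤ Fintype.card F := Fintype.card_pos
  -- cast the sum to ℤ
  have : ((∑ c : F, Nat.card {p : F × F // p.1 * p.2 = t - c ^ 2} : ℕ) : ℤ)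
      = ∑ c : F, ((Fintype.card F : ℤ) - 1 + if c ^ 2 = t then (Fintype.card F : ℤ) else 0) := by
    push_cast
    refine Finset.sum_congr rfl fun c _ => ?_
    rw [hcard c]
    by_cases h : c ^ 2 = t
    · rw [if_pos h, if_pos h]
      push_cast [Nat.cast_sub (by omega : 1 ≤ 2 * Fintype.card F)]
      ring
    · rw [if_neg h, if_neg h]
      push_cast [Nat.cast_sub h1]
      ring
  rw [this, Finset.sum_add_distrib, Finset.sum_const, ← Finset.sum_filter, Finset.sum_const,
    Finset.card_univ, nsmul_eq_mul, nsmul_eq_mul]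
  have hsq : (((univ.filter fun c : F => c ^ 2 = t).card : ℤ)) = quadraticChar F t + 1 := by
    rw [← quadraticChar_card_sqrts hchar t, Set.toFinset_setOf]
  rw [hsq]
  ring

private lemma card_sq3 (hchar : ringChar F ≠ 2) {i : F} (hi : i ^ 2 = -1) (t : F) :
    (Nat.card {x : F × F × F // x.1 ^ 2 + x.2.1 ^ 2 + x.2.2 ^ 2 = t} : ℤ)
      = (Fintype.card F : ℤ) ^ 2 + (Fintype.card F : ℤ) * quadraticChar F t := by
  have h2 : (2 : F) ≠ 0 := Ring.two_ne_zero hchar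
  have e : {x : F × F × F // x.1 ^ 2 + x.2.1 ^ 2 + x.2.2 ^ 2 = t}
      ≃ {x : F × F × F // x.1 * x.2.1 + x.2.2 ^ 2 = t} :=
  { toFun := fun x => ⟨(x.1.1 + i * x.1.2.1, x.1.1 - i * x.1.2.1, x.1.2.2), by
      show (x.1.1 + i * x.1.2.1) * (x.1.1 - i * x.1.2.1) + x.1.2.2 ^ 2 = t
      linear_combination x.2 - x.1.2.1 ^ 2 * hi⟩
    invFun := fun y => ⟨((y.1.1 + y.1.2.1) / 2, (y.1.2.1 - y.1.1) * i / 2, y.1.2.2), by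
      obtain ⟨⟨a, b, c⟩, h⟩ := y
      dsimp only
      field_simp
      linear_combination 4 * h + (b - a) ^ 2 * hi⟩
    left_inv := fun x => by
      obtain ⟨⟨a, b, c⟩, hx⟩ := x
      apply Subtype.ext
      dsimp only
      simp only [Prod.mk.injEq]
      refine ⟨?_, ?_, trivial⟩
      · field_simp
        ring
      · field_simp
        linear_combination (-2 * b) * hi
    right_inv := fun y => by
      obtain ⟨⟨a, b, c⟩, hy⟩ := y
      apply Subtype.ext
      dsimp only
      simp only [Prod.mk.injEq]
      refine ⟨?_, ?_, trivial⟩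
      · field_simp
        linear_combination (b - a) * hi
      · field_simp
        linear_combination (a - b) * hi }
  rw [Nat.card_congr e]
  exact card_abc hchar t

private lemma card_S6 (hchar : ringChar F ≠ 2) {i : F} (hi : i ^ 2 = -1) :
    (Nat.card {p : (F × F × F) × (F × F × F) //
        p.1.1 ^ 2 + p.1.2.1 ^ 2 + p.1.2.2 ^ 2 = p.2.1 ^ 2 + p.2.2.1 ^ 2 + p.2.2.2 ^ 2 ∧
        p.1.1 ^ 2 + p.1.2.1 ^ 2 + p.1.2.2 ^ 2 ≠ 0} : ℤ)
      = ((Fintype.card F : ℤ) - 1) *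
          ((Fintype.card F : ℤ) ^ 2 * (1 + (Fintype.card F : ℤ) ^ 2)) := by
  set S := {p : (F × F × F) × (F × F × F) //
        p.1.1 ^ 2 + p.1.2.1 ^ 2 + p.1.2.2 ^ 2 = p.2.1 ^ 2 + p.2.2.1 ^ 2 + p.2.2.2 ^ 2 ∧
        p.1.1 ^ 2 + p.1.2.1 ^ 2 + p.1.2.2 ^ 2 ≠ 0} with hS
  let f : S → {u : F // u ≠ 0} := fun p =>
    ⟨p.1.1.1 ^ 2 + p.1.1.2.1 ^ 2 + p.1.1.2.2 ^ 2, p.2.2⟩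
  have e2 : ∀ u : {u : F // u ≠ 0}, {p : S // f p = u}
      ≃ ({x : F × F × F // x.1 ^ 2 + x.2.1 ^ 2 + x.2.2 ^ 2 = u.1} ×
         {y : F × F × F // y.1 ^ 2 + y.2.1 ^ 2 + y.2.2 ^ 2 = u.1}) := fun u =>
    { toFun := fun p =>
        (⟨p.1.1.1, congrArg Subtype.val p.2⟩,
         ⟨p.1.1.2, p.1.2.1.symm.trans (congrArg Subtype.val p.2)⟩)
      invFun := fun w => ⟨⟨(w.1.1, w.2.1), ⟨w.1.2.trans w.2.2.symm, by
          rw [w.1.2]; exact u.2⟩⟩, Subtype.ext w.1.2⟩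
      left_inv := fun p => rfl
      right_inv := fun w => rfl }
  have hcount : Nat.card S = ∑ u : {u : F // u ≠ 0},
      Nat.card ({x : F × F × F // x.1 ^ 2 + x.2.1 ^ 2 + x.2.2 ^ 2 = u.1} ×
        {y : F × F × F // y.1 ^ 2 + y.2.1 ^ 2 + y.2.2 ^ 2 = u.1}) := by
    rw [Nat.card_congr (Equiv.sigmaFiberEquiv f).symm, nat_card_sigma']
    exact Finset.sum_congr rfl fun u _ => Nat.card_congr (e2 u)
  rw [hcount]
  push_cast [Nat.card_prod]
  have hterm : ∀ u : {u : F // u ≠ 0},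
      ((Nat.card {x : F × F × F // x.1 ^ 2 + x.2.1 ^ 2 + x.2.2 ^ 2 = u.1} : ℤ) *
        (Nat.card {y : F × F × F // y.1 ^ 2 + y.2.1 ^ 2 + y.2.2 ^ 2 = u.1} : ℤ))
        = ((Fintype.card F : ℤ) ^ 2 + (Fintype.card F : ℤ) * quadraticChar F u.1) ^ 2 := by
    intro u
    rw [card_sq3 hchar hi u.1]; ring
  rw [Finset.sum_congr rfl fun u _ => hterm u]
  have hstep : ∑ u : {u : F // u ≠ 0},
      ((Fintype.card F : ℤ) ^ 2 + (Fintype.card F : ℤ) * quadraticChar F u.1) ^ 2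
      = ∑ u ∈ univ.filter (fun u : F => u ≠ 0),
          ((Fintype.card F : ℤ) ^ 2 + (Fintype.card F : ℤ) * quadraticChar F u) ^ 2 :=
    (Finset.sum_subtype (p := fun u : F => u ≠ 0) (univ.filter fun u : F => u ≠ 0)
      (fun x => by simp)
      (fun u => ((Fintype.card F : ℤ) ^ 2 + (Fintype.card F : ℤ) * quadraticChar F u) ^ 2)).symm
  rw [hstep, Finset.filter_ne' univ 0, Finset.sum_erase_eq_sub (Finset.mem_univ 0)]
  have hexp : ∑ u : F, ((Fintype.card F : ℤ) ^ 2 + (Fintype.card F : ℤ) * quadraticChar F u) ^ 2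
      = ∑ u : F, ((Fintype.card F : ℤ) ^ 4
          + 2 * (Fintype.card F : ℤ) ^ 3 * quadraticChar F u
          + (Fintype.card F : ℤ) ^ 2 * (quadraticChar F u : ℤ) ^ 2) :=
    Finset.sum_congr rfl fun u _ => by ring
  have hsum1 : ∑ u : F, (quadraticChar F u : ℤ) = 0 := quadraticChar_sum_zero hchar
  have hsum2 : ∑ u : F, (quadraticChar F u : ℤ) ^ 2 = (Fintype.card F : ℤ) - 1 := by
    have h : ∀ u : F, (quadraticChar F u : ℤ) ^ 2 = 1 - (if u = 0 then 1 else 0) := by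
      intro u
      by_cases hu : u = 0
      · simp [hu, quadraticChar_zero]
      · rw [if_neg hu, quadraticChar_sq_one hu]; ring
    rw [Finset.sum_congr rfl fun u _ => h u, Finset.sum_sub_distrib,
      Finset.sum_const, Finset.sum_ite_eq' univ (0 : F) (fun _ => (1 : ℤ))]
    simp [Finset.card_univ]
  rw [hexp, Finset.sum_add_distrib, Finset.sum_add_distrib, Finset.sum_const,
    ← Finset.mul_sum, ← Finset.mul_sum, hsum1, hsum2, Finset.card_univ,
    quadraticChar_zero, nsmul_eq_mul]
  push_cast
  ring

end aux

/-- Let `q` be an odd prime power with `-1` a square in `F_q`.  The number of points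
`[x₁ : x₂ : x₃ : y₁ : y₂ : y₃]` of `P^5(F_q)` (lines through the origin of `F_q^6`)
satisfying `x₁² + x₂² + x₃² - y₁² - y₂² - y₃² = 0` and `x₁² + x₂² + x₃² ≠ 0` equals
`q²(1 + q²)`. -/
theorem card_Gr24_points (F : Type) [Field F] [Fintype F]
    (hodd : Odd (Fintype.card F)) (hi : ∃ i : F, i ^ 2 = -1) :
    Nat.card {ℓ : Submodule F (Fin 6 → F) //
        Module.finrank F ℓ = 1 ∧ ∀ x ∈ ℓ, x ≠ 0 →
          ((x 0) ^ 2 + (x 1) ^ 2 + (x 2) ^ 2 - ((x 3) ^ 2 + (x 4) ^ 2 + (x 5) ^ 2) = 0 ∧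
            (x 0) ^ 2 + (x 1) ^ 2 + (x 2) ^ 2 ≠ 0)}
      = Fintype.card F ^ 2 * (1 + Fintype.card F ^ 2) := by
  classical
  obtain ⟨i, hi⟩ := hi
  have hchar : ringChar F ≠ 2 := by
    intro h
    have h2 := FiniteField.even_card_of_char_two h
    rw [Nat.odd_iff] at hodd
    omega
  set T := {ℓ : Submodule F (Fin 6 → F) //
      Module.finrank F ℓ = 1 ∧ ∀ x ∈ ℓ, x ≠ 0 →
        ((x 0) ^ 2 + (x 1) ^ 2 + (x 2) ^ 2 - ((x 3) ^ 2 + (x 4) ^ 2 + (x 5) ^ 2) = 0 ∧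
          (x 0) ^ 2 + (x 1) ^ 2 + (x 2) ^ 2 ≠ 0)} with hT
  -- the set of good nonzero vectors
  have eS : {x : Fin 6 → F //
        (x 0) ^ 2 + (x 1) ^ 2 + (x 2) ^ 2 - ((x 3) ^ 2 + (x 4) ^ 2 + (x 5) ^ 2) = 0 ∧
          (x 0) ^ 2 + (x 1) ^ 2 + (x 2) ^ 2 ≠ 0} ≃
      {p : (F × F × F) × (F × F × F) //
        p.1.1 ^ 2 + p.1.2.1 ^ 2 + p.1.2.2 ^ 2 = p.2.1 ^ 2 + p.2.2.1 ^ 2 + p.2.2.2 ^ 2 ∧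
        p.1.1 ^ 2 + p.1.2.1 ^ 2 + p.1.2.2 ^ 2 ≠ 0} :=
  { toFun := fun x => ⟨((x.1 0, x.1 1, x.1 2), (x.1 3, x.1 4, x.1 5)),
      ⟨sub_eq_zero.mp x.2.1, x.2.2⟩⟩
    invFun := fun p =>
      ⟨![p.1.1.1, p.1.1.2.1, p.1.1.2.2, p.1.2.1, p.1.2.2.1, p.1.2.2.2],
        ⟨sub_eq_zero.mpr p.2.1, p.2.2⟩⟩
    left_inv := fun x => by
      apply Subtype.ext
      funext j
      fin_cases j <;> rfl
    right_inv := fun p => rfl }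
  have hScard : (Nat.card {x : Fin 6 → F //
        (x 0) ^ 2 + (x 1) ^ 2 + (x 2) ^ 2 - ((x 3) ^ 2 + (x 4) ^ 2 + (x 5) ^ 2) = 0 ∧
          (x 0) ^ 2 + (x 1) ^ 2 + (x 2) ^ 2 ≠ 0} : ℤ)
      = ((Fintype.card F : ℤ) - 1) *
          ((Fintype.card F : ℤ) ^ 2 * (1 + (Fintype.card F : ℤ) ^ 2)) := by
    rw [Nat.card_congr eS]
    exact card_S6 hchar hi
  -- choose a generator for each line
  have hgen : ∀ ℓ : T,
      ∃ v : Fin 6 → F, v ∈ ℓ.1 ∧ v ≠ 0 ∧ ∀ w ∈ ℓ.1, ∃ c : F, c • v = w := by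
    intro ℓ
    obtain ⟨v, hv0, hv⟩ := finrank_eq_one_iff'.mp ℓ.2.1
    refine ⟨v.1, v.2, fun h => hv0 (Subtype.ext h), fun w hw => ?_⟩
    obtain ⟨c, hc⟩ := hv ⟨w, hw⟩
    exact ⟨c, congrArg Subtype.val hc⟩
  choose g hg1 hg2 hg3 using hgen
  let SV := {x : Fin 6 → F //
        (x 0) ^ 2 + (x 1) ^ 2 + (x 2) ^ 2 - ((x 3) ^ 2 + (x 4) ^ 2 + (x 5) ^ 2) = 0 ∧
          (x 0) ^ 2 + (x 1) ^ 2 + (x 2) ^ 2 ≠ 0}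
  let Φ : T × Fˣ → SV := fun z =>
    ⟨(z.2 : F) • g z.1, by
      have hmem : (z.2 : F) • g z.1 ∈ z.1.1 := Submodule.smul_mem _ _ (hg1 z.1)
      have hne : (z.2 : F) • g z.1 ≠ 0 := smul_ne_zero (Units.ne_zero z.2) (hg2 z.1)
      exact z.1.2.2 _ hmem hne⟩
  -- span characterization
  have hspan : ∀ (ℓ : T) (v : Fin 6 → F), v ∈ ℓ.1 → v ≠ 0 →
      ℓ.1 = Submodule.span F {v} := by
    intro ℓ v hv hvne
    refine (Submodule.eq_of_le_of_finrank_eq ?_ ?_).symm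
    · exact (Submodule.span_le).mpr (Set.singleton_subset_iff.mpr hv)
    · rw [finrank_span_singleton hvne, ℓ.2.1]
  have hbij : Function.Bijective Φ := by
    constructor
    · rintro ⟨ℓ, c⟩ ⟨ℓ', c'⟩ h
      have h' : (c : F) • g ℓ = (c' : F) • g ℓ' := congrArg Subtype.val h
      have hvne : (c : F) • g ℓ ≠ 0 := smul_ne_zero (Units.ne_zero c) (hg2 ℓ)
      have hmem1 : (c : F) • g ℓ ∈ ℓ.1 := Submodule.smul_mem _ _ (hg1 ℓ)
      have hmem2 : (c : F) • g ℓ ∈ ℓ'.1 := by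
        rw [h']; exact Submodule.smul_mem _ _ (hg1 ℓ')
      have hll : ℓ = ℓ' := by
        apply Subtype.ext
        rw [hspan ℓ _ hmem1 hvne, hspan ℓ' _ hmem2 hvne]
      subst hll
      have hcc : (c : F) = (c' : F) := smul_left_injective F (hg2 ℓ) h'
      have : c = c' := Units.ext hcc
      rw [this]
    · intro v
      have hv0 : v.1 ≠ 0 := by
        intro h
        apply v.2.2
        rw [h]
        norm_num
      have h1 : Module.finrank F (Submodule.span F {v.1}) = 1 :=
        finrank_span_singleton hv0
      have h2 : ∀ x ∈ Submodule.span F {v.1}, x ≠ 0 →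
          ((x 0) ^ 2 + (x 1) ^ 2 + (x 2) ^ 2 - ((x 3) ^ 2 + (x 4) ^ 2 + (x 5) ^ 2) = 0 ∧
            (x 0) ^ 2 + (x 1) ^ 2 + (x 2) ^ 2 ≠ 0) := by
        intro x hx hxne
        obtain ⟨a, ha⟩ := Submodule.mem_span_singleton.mp hx
        have ha0 : a ≠ 0 := by
          rintro rfl
          rw [zero_smul] at ha
          exact hxne ha.symm
        subst ha
        have hQ := v.2.1
        have hs := v.2.2
        constructor
        · simp only [Pi.smul_apply, smul_eq_mul]
          linear_combination a ^ 2 * hQ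
        · simp only [Pi.smul_apply, smul_eq_mul]
          intro hzero
          apply hs
          have h4 : a ^ 2 * ((v.1 0) ^ 2 + (v.1 1) ^ 2 + (v.1 2) ^ 2) = 0 := by
            linear_combination hzero
          rcases mul_eq_zero.mp h4 with h5 | h5
          · exact absurd h5 (pow_ne_zero 2 ha0)
          · exact h5
      let ℓ : T := ⟨Submodule.span F {v.1}, h1, h2⟩
      have hgmem : g ℓ ∈ Submodule.span F {v.1} := hg1 ℓ
      obtain ⟨b, hb⟩ := Submodule.mem_span_singleton.mp hgmem
      have hb0 : b ≠ 0 := by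
        rintro rfl
        rw [zero_smul] at hb
        exact hg2 ℓ hb.symm
      refine ⟨(ℓ, (Units.mk0 b hb0)⁻¹), ?_⟩
      apply Subtype.ext
      show ((Units.mk0 b hb0)⁻¹ : Fˣ).val • g ℓ = v.1
      rw [← hb]
      simp [smul_smul, inv_mul_cancel₀ hb0]
  have hcard1 : Nat.card (T × Fˣ) = Nat.card SV := Nat.card_eq_of_bijective Φ hbij
  have hTq : Nat.card (T × Fˣ) = Nat.card T * (Fintype.card F - 1) := by
    rw [Nat.card_prod]
    congr 1
    rw [Nat.card_eq_fintype_card, Fintype.card_units]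
  have h1q : 1 < Fintype.card F := Fintype.one_lt_card
  have h5 : Nat.card T * (Fintype.card F - 1) = Nat.card SV := by
    rw [← hTq]; exact hcard1
  have hZ : (Nat.card T : ℤ) * ((Fintype.card F : ℤ) - 1)
      = ((Fintype.card F : ℤ) - 1) *
          ((Fintype.card F : ℤ) ^ 2 * (1 + (Fintype.card F : ℤ) ^ 2)) := by
    have h6 : ((Nat.card T * (Fintype.card F - 1) : ℕ) : ℤ) = ((Nat.card SV : ℕ) : ℤ) := by
      exact_mod_cast h5
    push_cast [Nat.cast_sub h1q.le] at h6
    rw [h6]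
    exact hScard
  have hne : ((Fintype.card F : ℤ) - 1) ≠ 0 :=
    sub_ne_zero.mpr (by exact_mod_cast h1q.ne')
  have hfinal : (Nat.card T : ℤ)
      = (Fintype.card F : ℤ) ^ 2 * (1 + (Fintype.card F : ℤ) ^ 2) := by
    rw [mul_comm ((Fintype.card F : ℤ) - 1) _] at hZ
    exact mul_right_cancel₀ hne hZ
  exact_mod_cast hfinal
end

section
/- Let q be an odd prime power with -1 a square in F_q. Define, for (k,n) = (2j,2m), (2j,2m+1), or (2j+1,2m+1), the number N(k,n) of F_q points of the split form of the real Grassmannian (i.e. |Gr(k,n)_{F_q}| as in the paper). Then N(k,n) = q^r · [m choose j]_{q²} with r = k(n-k) - 2j(m-j); in particular, for (k,n)=(1,3): the number of points of {ℓ ∈ P²(F_q) : x²+y²+z² ≠ 0 on ℓ∖{0}} equals q². -/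
/-- Let `q` be an odd prime power with `-1` a square in `F_q`.  The number of `F_q`-points
of the split form of the real Grassmannian `Gr(1,3) = ℝP²`, namely the number of lines
`ℓ ∈ P²(F_q)` on which the quadratic form `x² + y² + z²` vanishes only at `0`,
equals `q²` (the case `(k, n) = (1, 3)`, `r = 2`, `[1 choose 0]_{q²} = 1` of the formula
`|Gr(k,n)_{F_q}| = q^r [m choose j]_{q²}` with `r = k(n-k) - 2j(m-j)`). -/
theorem card_Gr13_points (F : Type) [Field F] [Fintype F]
    (hodd : Odd (Fintype.card F)) (hi : ∃ i : F, i ^ 2 = -1) :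
    Nat.card {ℓ : Submodule F (Fin 3 → F) //
        Module.finrank F ℓ = 1 ∧
          ∀ x ∈ ℓ, (x 0) ^ 2 + (x 1) ^ 2 + (x 2) ^ 2 = 0 → x = 0}
      = Fintype.card F ^ 2 := by
  classical
  obtain ⟨i, hi2⟩ := hi
  set q := Fintype.card F with hq
  have hq2 : 2 ≤ q := Fintype.one_lt_card
  have hchar : ringChar F ≠ 2 := by
    intro h
    have h2 := FiniteField.even_card_iff_char_two.mp h
    obtain ⟨k, hk⟩ := hodd
    omega
  have h2 : (2 : F) ≠ 0 := Ring.two_ne_zero hchar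
  have hi0 : i ≠ 0 := by
    intro h
    rw [h] at hi2
    simp at hi2
  -- Step 1: count solutions of u*v + w^2 = 0
  have key1 : Fintype.card {p : F × F × F // p.1 * p.2.1 + p.2.2 ^ 2 = 0} = q ^ 2 := by
    have e : (F × F) ≃ {p : F × F × F // p.1 * p.2.1 + p.2.2 ^ 2 = 0} := by
      refine ⟨fun ut => if h : ut.1 = 0 then ⟨(0, ut.2, 0), by simp⟩
          else ⟨(ut.1, -ut.2 ^ 2 / ut.1, ut.2), by field_simp; ring⟩,
        fun p => (p.1.1, if p.1.1 = 0 then p.1.2.1 else p.1.2.2), ?_, ?_⟩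
      · rintro ⟨u, t⟩
        by_cases h : u = 0
        · simp [h]
        · simp [h]
      · rintro ⟨⟨u, v, w⟩, hp⟩
        simp only at hp
        by_cases h : u = 0
        · have hw : w = 0 := by
            have hww : w ^ 2 = 0 := by rw [h] at hp; simpa using hp
            exact pow_eq_zero_iff (n := 2) (by norm_num) |>.mp hww
          simp only [h, if_pos rfl, dif_pos rfl]
          exact Subtype.ext (by simp [h, hw])
        · simp only [h, if_neg h, dif_neg h]
          have hv : v = -w ^ 2 / u := by
            rw [eq_div_iff h]
            linear_combination hp
          exact Subtype.ext (by simp [hv])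
    rw [← Fintype.card_congr e, Fintype.card_prod, sq]
  -- Step 2: count solutions of x^2 + y^2 + z^2 = 0
  have key2 : Fintype.card {p : F × F × F // p.1 ^ 2 + p.2.1 ^ 2 + p.2.2 ^ 2 = 0} = q ^ 2 := by
    rw [← key1]
    apply Fintype.card_congr
    refine ⟨fun p => ⟨(p.1.1 + i * p.1.2.1, p.1.1 - i * p.1.2.1, p.1.2.2), ?_⟩,
        fun p => ⟨((p.1.1 + p.1.2.1) / 2, (p.1.1 - p.1.2.1) / (2 * i), p.1.2.2), ?_⟩, ?_, ?_⟩
    · obtain ⟨⟨x, y, z⟩, hp⟩ := p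
      simp only at hp ⊢
      linear_combination hp - y ^ 2 * hi2
    · obtain ⟨⟨u, v, w⟩, hp⟩ := p
      simp only at hp ⊢
      have h2i : (2 * i) ≠ 0 := mul_ne_zero h2 hi0
      field_simp
      linear_combination (-4 : F) * hp + ((u + v) ^ 2 + 4 * w ^ 2) * hi2
    · rintro ⟨⟨x, y, z⟩, hp⟩
      have e1 : (x + i * y + (x - i * y)) / 2 = x := by field_simp; ring
      have e2 : (x + i * y - (x - i * y)) / (2 * i) = y := by
        field_simp
        ring
      exact Subtype.ext (by simp only [e1, e2])
    · rintro ⟨⟨u, v, w⟩, hp⟩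
      have e1 : (u + v) / 2 + i * ((u - v) / (2 * i)) = u := by field_simp; ring
      have e2 : (u + v) / 2 - i * ((u - v) / (2 * i)) = v := by field_simp; ring
      exact Subtype.ext (by simp only [e1, e2])
  -- Step 3: transfer to Fin 3 → F
  have key3 : Fintype.card {x : Fin 3 → F // x 0 ^ 2 + x 1 ^ 2 + x 2 ^ 2 = 0} = q ^ 2 := by
    rw [← key2]
    apply Fintype.card_congr
    refine ⟨fun x => ⟨(x.1 0, x.1 1, x.1 2), x.2⟩,
        fun p => ⟨![p.1.1, p.1.2.1, p.1.2.2], p.2⟩, ?_, ?_⟩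
    · rintro ⟨x, hx⟩
      refine Subtype.ext (funext fun j => ?_)
      fin_cases j <;> rfl
    · rintro ⟨⟨u, v, w⟩, hp⟩
      rfl
  have key4 : Fintype.card {x : Fin 3 → F // ¬ (x 0 ^ 2 + x 1 ^ 2 + x 2 ^ 2 = 0)}
      = q ^ 3 - q ^ 2 := by
    rw [Fintype.card_subtype_compl, key3]
    congr 1
    rw [Fintype.card_fun, Fintype.card_fin]
  -- The fibration over the set of lines
  have hfinS : Finite (Submodule F (Fin 3 → F)) :=
    Finite.of_injective (fun L => (L : Set (Fin 3 → F))) SetLike.coe_injective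
  set S := {ℓ : Submodule F (Fin 3 → F) //
      Module.finrank F ℓ = 1 ∧
        ∀ x ∈ ℓ, (x 0) ^ 2 + (x 1) ^ 2 + (x 2) ^ 2 = 0 → x = 0} with hS
  have : Fintype S := Fintype.ofFinite S
  have hvne : ∀ v : Fin 3 → F, ¬ (v 0 ^ 2 + v 1 ^ 2 + v 2 ^ 2 = 0) → v ≠ 0 := by
    intro v hv h
    apply hv
    rw [h]
    simp
  have hani : ∀ v : Fin 3 → F, ¬ (v 0 ^ 2 + v 1 ^ 2 + v 2 ^ 2 = 0) →
      Module.finrank F (Submodule.span F {v}) = 1 ∧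
        ∀ x ∈ Submodule.span F {v}, (x 0) ^ 2 + (x 1) ^ 2 + (x 2) ^ 2 = 0 → x = 0 := by
    intro v hv
    refine ⟨finrank_span_singleton (hvne v hv), ?_⟩
    intro x hx hx0
    obtain ⟨c, hc⟩ := Submodule.mem_span_singleton.mp hx
    have hx' : ∀ j, x j = c * v j := fun j => by rw [← hc]; simp
    rw [hx' 0, hx' 1, hx' 2] at hx0
    have hcQ : c ^ 2 * (v 0 ^ 2 + v 1 ^ 2 + v 2 ^ 2) = 0 := by linear_combination hx0
    have hc0 : c = 0 := by
      rcases mul_eq_zero.mp hcQ with h | h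
      · exact pow_eq_zero_iff (n := 2) (by norm_num) |>.mp h
      · exact absurd h hv
    rw [← hc, hc0, zero_smul]
  let f : {v : Fin 3 → F // ¬ (v 0 ^ 2 + v 1 ^ 2 + v 2 ^ 2 = 0)} → S :=
    fun v => ⟨Submodule.span F {v.1}, hani v.1 v.2⟩
  have hfib : ∀ ℓ : S, Fintype.card {v // f v = ℓ} = q - 1 := by
    rintro ⟨L, hL1, hL2⟩
    have hLe : {v // f v = (⟨L, hL1, hL2⟩ : S)} ≃ {x : L // x ≠ 0} := by
      refine ⟨fun v => ⟨⟨v.1.1, ?_⟩, ?_⟩, fun x => ⟨⟨x.1.1, ?_⟩, ?_⟩, ?_, ?_⟩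
      · have hsp : Submodule.span F {v.1.1} = L := congrArg Subtype.val v.2
        have hm : v.1.1 ∈ Submodule.span F {v.1.1} := Submodule.mem_span_singleton_self v.1.1
        rwa [hsp] at hm
      · intro h
        exact hvne v.1.1 v.1.2 (by simpa using congrArg Subtype.val h)
      · intro h
        exact x.2 (Subtype.ext (hL2 x.1.1 x.1.2 h))
      · refine Subtype.ext ?_
        show Submodule.span F {x.1.1} = L
        refine Submodule.eq_of_le_of_finrank_eq ?_ ?_
        · rw [Submodule.span_le, Set.singleton_subset_iff]
          exact x.1.2
        · rw [hL1, finrank_span_singleton]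
          intro h
          exact x.2 (Subtype.ext h)
      · rintro ⟨⟨v, hv⟩, hfv⟩
        rfl
      · rintro ⟨⟨x, hx⟩, hx0⟩
        rfl
    rw [Fintype.card_congr hLe]
    have hcc : Fintype.card {x : L // ¬ (x = 0)} =
        Fintype.card L - Fintype.card {x : L // x = 0} := Fintype.card_subtype_compl _
    simp only [ne_eq]
    rw [hcc, Fintype.card_subtype_eq (0 : L)]
    congr 1
    have hcl := Module.card_eq_pow_finrank (K := F) (V := L)
    rw [hL1, pow_one] at hcl
    exact hcl
  have hcount : Fintype.card {v : Fin 3 → F // ¬ (v 0 ^ 2 + v 1 ^ 2 + v 2 ^ 2 = 0)}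
      = Fintype.card S * (q - 1) := by
    calc Fintype.card {v : Fin 3 → F // ¬ (v 0 ^ 2 + v 1 ^ 2 + v 2 ^ 2 = 0)}
        = Fintype.card (Σ ℓ : S, {v // f v = ℓ}) :=
          (Fintype.card_congr (Equiv.sigmaFiberEquiv f)).symm
      _ = ∑ ℓ : S, Fintype.card {v // f v = ℓ} := by exact Fintype.card_sigma
      _ = Fintype.card S * (q - 1) := by
          simp only [hfib]
          rw [Finset.sum_const, Finset.card_univ, smul_eq_mul]
  have hmain : Fintype.card S * (q - 1) = q ^ 2 * (q - 1) := by
    rw [← hcount, key4, Nat.mul_sub, mul_one, ← pow_succ]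
  have hfin : Fintype.card S = q ^ 2 := Nat.eq_of_mul_eq_mul_right (Nat.sub_pos_of_lt hq2) hmain
  rw [Nat.card_eq_fintype_card]
  exact hfin
end
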